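/- Let T > 0 and let φ, ψ : [0,T] × ℝ → ℝ be continuous functions such that ψ(t,·) and φ(t,·) are strictly increasing for every t ∈ [0,T]. Let A^R, A^L ∈ I[0,T], A := A^R − A^L, y(t) := A(T) − A(t), and suppose ψ(t, y(t)) ≤ 0 ≤ φ(t, y(t)) for all t ∈ [0,T] together with the one-sided Skorokhod condition ∫_0^T φ(t, y(t)) dA^R(t) = 0. Let Ā^R, Ā^L ∈ I[0,T], Ā := Ā^R − Ā^L, ȳ(t) := Ā(T) − Ā(t), and suppose ψ(t, ȳ(t)) ≤ 0 ≤ φ(t, ȳ(t)) for all t ∈ [0,T] together with the one-sided Skorokhod condition ∫_0^T ψ(t, ȳ(t)) dĀ^L(t) = 0. Then y(t) ≤ ȳ(t) for all t ∈ [0,T]. (In particular, a reflecting function satisfying both Skorokhod conditions is dominated pointwise, in the sense of t ↦ A(T) − A(t), by any reflecting function satisfying the constraints together with only the lower Skorokhod condition, and dominates any reflecting function satisfying the constraints together with only the upper Skorokhod condition.) -/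

import Mathlib

open MeasureTheory Set

/-- `I[0,T]`: continuous nondecreasing functions on `[0,T]` vanishing at `0`,
encoded as their constant extension to all of `ℝ`. -/
structure IFun (T : ℝ) where
  toFun : ℝ → ℝ
  mono : Monotone toFun
  cont : Continuous toFun
  zero_left : ∀ t ≤ (0 : ℝ), toFun t = 0
  const_right : ∀ t, T ≤ t → toFun t = toFun T

/-- The Stieltjes function associated with an element of `I[0,T]`. -/
noncomputable def IFun.stieltjes {T : ℝ} (k : IFun T) : StieltjesFunction ℝ where
  toFun := k.toFun
  mono' := k.mono
  right_continuous' := fun _ => k.cont.continuousAt.continuousWithinAt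

/-- The Lebesgue–Stieltjes measure induced by an element of `I[0,T]`. -/
noncomputable def IFun.measure {T : ℝ} (k : IFun T) : Measure ℝ := k.stieltjes.measure

/-- The "backward remainder" `t ↦ A(T) - A(t)` of `A = A^R - A^L`. -/
noncomputable def backRem (T : ℝ) (AR AL : IFun T) : ℝ → ℝ :=
  fun t => (AR.toFun T - AL.toFun T) - (AR.toFun t - AL.toFun t)

lemma IFun.leftLim_eq {T : ℝ} (k : IFun T) (a : ℝ) :
    Function.leftLim k.toFun a = k.toFun a := by
  have h : (nhdsWithin a (Iio a)).NeBot := inferInstance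
  exact leftLim_eq_of_tendsto ((k.cont.tendsto a).mono_left nhdsWithin_le_nhds)

lemma aux_const {T : ℝ} (k : IFun T) (g : ℝ → ℝ)
    (hg : ContinuousOn g (Icc 0 T))
    (hnn : ∀ t ∈ Icc (0:ℝ) T, 0 ≤ g t)
    (hint : (∫ t in Icc 0 T, g t ∂k.measure) = 0)
    {t₀ t₁ : ℝ} (h0 : 0 ≤ t₀) (h01 : t₀ ≤ t₁) (h1 : t₁ ≤ T)
    (hgpos : ∀ t ∈ Ico t₀ t₁, 0 < g t) :
    k.toFun t₁ = k.toFun t₀ := by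
  have hmeas : k.measure = k.stieltjes.measure := rfl
  have hInt' : IntegrableOn g (Icc 0 T) k.stieltjes.measure :=
    hg.integrableOn_compact isCompact_Icc
  have hInt : IntegrableOn g (Icc 0 T) k.measure := hInt'
  have hnn' : 0 ≤ᵐ[k.measure.restrict (Icc 0 T)] g :=
    ae_restrict_of_forall_mem measurableSet_Icc hnn
  have hae : g =ᵐ[k.measure.restrict (Icc 0 T)] 0 :=
    (integral_eq_zero_iff_of_nonneg_ae hnn' hInt).mp hint
  have hzero : k.measure.restrict (Icc 0 T) {x | g x ≠ 0} = 0 := by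
    simpa using ae_iff.mp hae
  have hIoo : k.measure (Ioo t₀ t₁) = 0 := by
    have hsub : Ioo t₀ t₁ ⊆ {x | g x ≠ 0} := by
      intro x hx
      exact ne_of_gt (hgpos x (Set.mem_Ico.mpr ⟨le_of_lt hx.1, hx.2⟩))
    have : k.measure.restrict (Icc 0 T) (Ioo t₀ t₁) = 0 :=
      measure_mono_null hsub hzero
    rwa [Measure.restrict_apply measurableSet_Ioo,
      inter_eq_left.mpr (fun x hx => Set.mem_Icc.mpr ⟨h0.trans hx.1.le, hx.2.le.trans h1⟩)] at this
  have hIoc : k.measure (Ioc t₀ t₁) = 0 := by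
    rcases eq_or_lt_of_le h01 with h | h
    · simp [h]
    · rw [← Ioo_union_Icc_eq_Ioc h le_rfl]
      refine measure_union_null hIoo ?_
      rw [Icc_self]
      have := k.stieltjes.measure_singleton t₁
      rw [hmeas, this, show (↑k.stieltjes : ℝ → ℝ) = k.toFun from rfl, k.leftLim_eq]
      simp
  have := k.stieltjes.measure_Ioc t₀ t₁
  rw [← hmeas, hIoc, show (↑k.stieltjes : ℝ → ℝ) = k.toFun from rfl] at this
  have h1 : k.toFun t₁ - k.toFun t₀ ≤ 0 := by
    by_contra h
    push_neg at h
    rw [eq_comm, ENNReal.ofReal_eq_zero] at this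
    exact absurd this (not_le.mpr h)
  exact le_antisymm (by linarith) (k.mono h01)

/-- comparison between one-sided Skorokhod conditions: if
`y(t) = A(T) - A(t)` satisfies the constraints together with the upper Skorokhod
condition `∫ φ(t,y(t)) dA^R = 0`, and `ȳ(t) = Ā(T) - Ā(t)` satisfies the
constraints together with the lower Skorokhod condition `∫ ψ(t,ȳ(t)) dĀ^L = 0`,
then `y(t) ≤ ȳ(t)` on `[0,T]`. -/
theorem stmt11 (T : ℝ) (hT : 0 < T) (φ ψ : ℝ → ℝ → ℝ)
    (hφc : ContinuousOn (fun p : ℝ × ℝ => φ p.1 p.2) (Icc 0 T ×ˢ univ))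
    (hψc : ContinuousOn (fun p : ℝ × ℝ => ψ p.1 p.2) (Icc 0 T ×ˢ univ))
    (hφm : ∀ t ∈ Icc (0 : ℝ) T, StrictMono (φ t))
    (hψm : ∀ t ∈ Icc (0 : ℝ) T, StrictMono (ψ t))
    (AR AL BR BL : IFun T)
    (hcon : ∀ t ∈ Icc (0 : ℝ) T,
      ψ t (backRem T AR AL t) ≤ 0 ∧ 0 ≤ φ t (backRem T AR AL t))
    (hskR : (∫ t in Icc 0 T, φ t (backRem T AR AL t) ∂AR.measure) = 0)
    (hcon' : ∀ t ∈ Icc (0 : ℝ) T,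
      ψ t (backRem T BR BL t) ≤ 0 ∧ 0 ≤ φ t (backRem T BR BL t))
    (hskL' : (∫ t in Icc 0 T, ψ t (backRem T BR BL t) ∂BL.measure) = 0) :
    ∀ t ∈ Icc (0 : ℝ) T, backRem T AR AL t ≤ backRem T BR BL t := by
  by_contra hcontra
  push_neg at hcontra
  obtain ⟨t₀, ht₀, hgt⟩ := hcontra
  have hcA : Continuous (backRem T AR AL) := by
    unfold backRem
    exact (continuous_const.sub (AR.cont.sub AL.cont))
  have hcB : Continuous (backRem T BR BL) := by
    unfold backRem
    exact (continuous_const.sub (BR.cont.sub BL.cont))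
  set f : ℝ → ℝ := fun t => backRem T AR AL t - backRem T BR BL t with hfdef
  have hf : Continuous f := hcA.sub hcB
  have hfT : f T = 0 := by simp [hfdef, backRem]
  have hft₀ : 0 < f t₀ := sub_pos.mpr hgt
  set S : Set ℝ := Icc t₀ T ∩ f ⁻¹' {0} with hSdef
  have hTS : T ∈ S := ⟨⟨ht₀.2, le_rfl⟩, hfT⟩
  have hSne : S.Nonempty := ⟨T, hTS⟩
  have hSbd : BddBelow S := ⟨t₀, fun x hx => hx.1.1⟩
  have hSclosed : IsClosed S := isClosed_Icc.inter (isClosed_singleton.preimage hf)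
  set t₁ := sInf S with ht₁def
  have ht₁S : t₁ ∈ S := hSclosed.csInf_mem hSne hSbd
  have ht₁f : f t₁ = 0 := ht₁S.2
  have ht₀1 : t₀ < t₁ := by
    rcases lt_or_eq_of_le ht₁S.1.1 with h | h
    · exact h
    · exact absurd (h ▸ ht₁f) (ne_of_gt hft₀)
  have ht₁T : t₁ ≤ T := ht₁S.1.2
  have hIcoSub : ∀ t ∈ Ico t₀ t₁, t ∈ Icc (0:ℝ) T :=
    fun t ht => ⟨ht₀.1.trans ht.1, ht.2.le.trans ht₁T⟩
  have hpos : ∀ t ∈ Ico t₀ t₁, 0 < f t := by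
    intro t ht
    by_contra h
    push_neg at h
    have hIVT := intermediate_value_Icc' ht.1 hf.continuousOn (a := t₀) (b := t)
    have h0mem : (0:ℝ) ∈ Icc (f t) (f t₀) := ⟨h, hft₀.le⟩
    obtain ⟨s, hs, hfs⟩ := hIVT h0mem
    have hsS : s ∈ S := ⟨⟨hs.1, (hs.2.trans ht.2.le).trans ht₁T⟩, hfs⟩
    exact absurd (csInf_le hSbd hsS) (not_le.mpr (lt_of_le_of_lt hs.2 ht.2))
  -- apply aux_const to AR
  have hcgA : ContinuousOn (fun t => φ t (backRem T AR AL t)) (Icc 0 T) :=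
    hφc.comp ((continuous_id.prodMk hcA).continuousOn)
      (fun t ht => ⟨ht, mem_univ _⟩)
  have hAR : AR.toFun t₁ = AR.toFun t₀ := by
    refine aux_const AR _ hcgA (fun t ht => (hcon t ht).2) hskR ht₀.1 ht₀1.le ht₁T ?_
    intro t ht
    have htI := hIcoSub t ht
    have : backRem T BR BL t < backRem T AR AL t := sub_pos.mp (hpos t ht)
    exact lt_of_le_of_lt (hcon' t htI).2 (hφm t htI this)
  have hcgB : ContinuousOn (fun t => -(ψ t (backRem T BR BL t))) (Icc 0 T) :=
    (hψc.comp ((continuous_id.prodMk hcB).continuousOn)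
      (fun t ht => ⟨ht, mem_univ _⟩)).neg
  have hBL : BL.toFun t₁ = BL.toFun t₀ := by
    refine aux_const BL _ hcgB (fun t ht => neg_nonneg.mpr (hcon' t ht).1)
      (by rw [integral_neg, hskL', neg_zero]) ht₀.1 ht₀1.le ht₁T ?_
    intro t ht
    have htI := hIcoSub t ht
    have : backRem T BR BL t < backRem T AR AL t := sub_pos.mp (hpos t ht)
    have := lt_of_lt_of_le (hψm t htI this) (hcon t htI).1
    linarith
  have hAL := AL.mono ht₀1.le
  have hBR := BR.mono ht₀1.le
  have e1 : f t₁ = 0 := ht₁f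
  have e0 : 0 < f t₀ := hft₀
  simp only [hfdef, backRem] at e1 e0
  linarith
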